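/- Let ψ ∈ ℂ²⊗ℂ²⊗ℂ² be a unit vector and let ρ_A, ρ_B, ρ_C denote the reduced density matrices obtained by partial trace over the complementary pairs of tensor factors. Let λ_A, λ_B, λ_C be their respective smallest eigenvalues. Then λ_A ≤ λ_B + λ_C (and similarly for the cyclic permutations). -/

import Mathlib

open scoped ComplexConjugate

/-- Reduced density matrix of qubit `A` of a pure three-qubit state `ψ`
(partial trace over the `B` and `C` factors). -/
noncomputable def rhoA (ψ : Fin 2 → Fin 2 → Fin 2 → ℂ) : Matrix (Fin 2) (Fin 2) ℂ :=
  fun i i' => ∑ j : Fin 2, ∑ k : Fin 2, ψ i j k * conj (ψ i' j k)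

/-- Reduced density matrix of qubit `B`. -/
noncomputable def rhoB (ψ : Fin 2 → Fin 2 → Fin 2 → ℂ) : Matrix (Fin 2) (Fin 2) ℂ :=
  fun j j' => ∑ i : Fin 2, ∑ k : Fin 2, ψ i j k * conj (ψ i j' k)

/-- Reduced density matrix of qubit `C`. -/
noncomputable def rhoC (ψ : Fin 2 → Fin 2 → Fin 2 → ℂ) : Matrix (Fin 2) (Fin 2) ℂ :=
  fun k k' => ∑ i : Fin 2, ∑ j : Fin 2, ψ i j k * conj (ψ i j k')

namespace HiguchiAux

open Complex Matrix

set_option maxRecDepth 100000 in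
set_option maxHeartbeats 2000000 in
lemma keyId (b0 b1 c0 c1 p00 p01 p10 p11 : ℂ)
    (hb : b0 * conj b0 + b1 * conj b1 = 1)
    (hc : c0 * conj c0 + c1 * conj c1 = 1) :
    (p00 - b0 * (conj b0 * p00 + conj b1 * p10) - c0 * (conj c0 * p00 + conj c1 * p01)
        + b0 * c0 * (conj c0 * (conj b0 * p00 + conj b1 * p10) + conj c1 * (conj b0 * p01 + conj b1 * p11)))
      * conj (p00 - b0 * (conj b0 * p00 + conj b1 * p10) - c0 * (conj c0 * p00 + conj c1 * p01)
        + b0 * c0 * (conj c0 * (conj b0 * p00 + conj b1 * p10) + conj c1 * (conj b0 * p01 + conj b1 * p11)))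
    + (p01 - b0 * (conj b0 * p01 + conj b1 * p11) - c1 * (conj c0 * p00 + conj c1 * p01)
        + b0 * c1 * (conj c0 * (conj b0 * p00 + conj b1 * p10) + conj c1 * (conj b0 * p01 + conj b1 * p11)))
      * conj (p01 - b0 * (conj b0 * p01 + conj b1 * p11) - c1 * (conj c0 * p00 + conj c1 * p01)
        + b0 * c1 * (conj c0 * (conj b0 * p00 + conj b1 * p10) + conj c1 * (conj b0 * p01 + conj b1 * p11)))
    + (p10 - b1 * (conj b0 * p00 + conj b1 * p10) - c0 * (conj c0 * p10 + conj c1 * p11)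
        + b1 * c0 * (conj c0 * (conj b0 * p00 + conj b1 * p10) + conj c1 * (conj b0 * p01 + conj b1 * p11)))
      * conj (p10 - b1 * (conj b0 * p00 + conj b1 * p10) - c0 * (conj c0 * p10 + conj c1 * p11)
        + b1 * c0 * (conj c0 * (conj b0 * p00 + conj b1 * p10) + conj c1 * (conj b0 * p01 + conj b1 * p11)))
    + (p11 - b1 * (conj b0 * p01 + conj b1 * p11) - c1 * (conj c0 * p10 + conj c1 * p11)
        + b1 * c1 * (conj c0 * (conj b0 * p00 + conj b1 * p10) + conj c1 * (conj b0 * p01 + conj b1 * p11)))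
      * conj (p11 - b1 * (conj b0 * p01 + conj b1 * p11) - c1 * (conj c0 * p10 + conj c1 * p11)
        + b1 * c1 * (conj c0 * (conj b0 * p00 + conj b1 * p10) + conj c1 * (conj b0 * p01 + conj b1 * p11)))
    = ((p00 * conj p00 + p01 * conj p01 + p10 * conj p10 + p11 * conj p11)
        + (conj c0 * (conj b0 * p00 + conj b1 * p10) + conj c1 * (conj b0 * p01 + conj b1 * p11))
          * conj (conj c0 * (conj b0 * p00 + conj b1 * p10) + conj c1 * (conj b0 * p01 + conj b1 * p11)))
      - (((conj b0 * p00 + conj b1 * p10) * conj (conj b0 * p00 + conj b1 * p10)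
          + (conj b0 * p01 + conj b1 * p11) * conj (conj b0 * p01 + conj b1 * p11))
        + ((conj c0 * p00 + conj c1 * p01) * conj (conj c0 * p00 + conj c1 * p01)
          + (conj c0 * p10 + conj c1 * p11) * conj (conj c0 * p10 + conj c1 * p11))) := by
  linear_combination (norm := (simp only [map_add, map_sub, _root_.map_mul, Complex.conj_conj]; ring1))
    (((conj b0 * p00 + conj b1 * p10) * conj (conj b0 * p00 + conj b1 * p10)
        + (conj b0 * p01 + conj b1 * p11) * conj (conj b0 * p01 + conj b1 * p11)
      - ((conj c0 * (conj b0 * p00 + conj b1 * p10) + conj c1 * (conj b0 * p01 + conj b1 * p11))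
          * conj (conj c0 * (conj b0 * p00 + conj b1 * p10) + conj c1 * (conj b0 * p01 + conj b1 * p11)))
        * (2 - (c0 * conj c0 + c1 * conj c1))) : ℂ) * hb
    + (((conj c0 * p00 + conj c1 * p01) * conj (conj c0 * p00 + conj c1 * p01)
          + (conj c0 * p10 + conj c1 * p11) * conj (conj c0 * p10 + conj c1 * p11)
      - (conj c0 * (conj b0 * p00 + conj b1 * p10) + conj c1 * (conj b0 * p01 + conj b1 * p11))
          * conj (conj c0 * (conj b0 * p00 + conj b1 * p10) + conj c1 * (conj b0 * p01 + conj b1 * p11))) : ℂ) * hc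

lemma keyIneq (b0 b1 c0 c1 p00 p01 p10 p11 : ℂ)
    (hb : normSq b0 + normSq b1 = 1)
    (hc : normSq c0 + normSq c1 = 1) :
    (normSq (conj b0 * p00 + conj b1 * p10) + normSq (conj b0 * p01 + conj b1 * p11))
      + (normSq (conj c0 * p00 + conj c1 * p01) + normSq (conj c0 * p10 + conj c1 * p11))
    ≤ (normSq p00 + normSq p01 + normSq p10 + normSq p11)
      + normSq (conj c0 * (conj b0 * p00 + conj b1 * p10)
          + conj c1 * (conj b0 * p01 + conj b1 * p11)) := by
  have hb' : b0 * conj b0 + b1 * conj b1 = 1 := by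
    rw [mul_conj, mul_conj]; exact_mod_cast congrArg (Complex.ofReal) hb
  have hc' : c0 * conj c0 + c1 * conj c1 = 1 := by
    rw [mul_conj, mul_conj]; exact_mod_cast congrArg (Complex.ofReal) hc
  have H := keyId b0 b1 c0 c1 p00 p01 p10 p11 hb' hc'
  rw [mul_conj, mul_conj, mul_conj, mul_conj, mul_conj, mul_conj, mul_conj, mul_conj,
    mul_conj, mul_conj, mul_conj, mul_conj, mul_conj] at H
  have H' : (normSq (p00 - b0 * (conj b0 * p00 + conj b1 * p10) - c0 * (conj c0 * p00 + conj c1 * p01)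
        + b0 * c0 * (conj c0 * (conj b0 * p00 + conj b1 * p10) + conj c1 * (conj b0 * p01 + conj b1 * p11)))
    + normSq (p01 - b0 * (conj b0 * p01 + conj b1 * p11) - c1 * (conj c0 * p00 + conj c1 * p01)
        + b0 * c1 * (conj c0 * (conj b0 * p00 + conj b1 * p10) + conj c1 * (conj b0 * p01 + conj b1 * p11)))
    + normSq (p10 - b1 * (conj b0 * p00 + conj b1 * p10) - c0 * (conj c0 * p10 + conj c1 * p11)
        + b1 * c0 * (conj c0 * (conj b0 * p00 + conj b1 * p10) + conj c1 * (conj b0 * p01 + conj b1 * p11)))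
    + normSq (p11 - b1 * (conj b0 * p01 + conj b1 * p11) - c1 * (conj c0 * p10 + conj c1 * p11)
        + b1 * c1 * (conj c0 * (conj b0 * p00 + conj b1 * p10) + conj c1 * (conj b0 * p01 + conj b1 * p11))) : ℝ)
    = ((normSq p00 + normSq p01 + normSq p10 + normSq p11)
        + normSq (conj c0 * (conj b0 * p00 + conj b1 * p10) + conj c1 * (conj b0 * p01 + conj b1 * p11)))
      - ((normSq (conj b0 * p00 + conj b1 * p10) + normSq (conj b0 * p01 + conj b1 * p11))
        + (normSq (conj c0 * p00 + conj c1 * p01) + normSq (conj c0 * p10 + conj c1 * p11))) := by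
    exact_mod_cast H
  nlinarith [normSq_nonneg (p00 - b0 * (conj b0 * p00 + conj b1 * p10) - c0 * (conj c0 * p00 + conj c1 * p01)
        + b0 * c0 * (conj c0 * (conj b0 * p00 + conj b1 * p10) + conj c1 * (conj b0 * p01 + conj b1 * p11))),
    normSq_nonneg (p01 - b0 * (conj b0 * p01 + conj b1 * p11) - c1 * (conj c0 * p00 + conj c1 * p01)
        + b0 * c1 * (conj c0 * (conj b0 * p00 + conj b1 * p10) + conj c1 * (conj b0 * p01 + conj b1 * p11))),
    normSq_nonneg (p10 - b1 * (conj b0 * p00 + conj b1 * p10) - c0 * (conj c0 * p10 + conj c1 * p11)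
        + b1 * c0 * (conj c0 * (conj b0 * p00 + conj b1 * p10) + conj c1 * (conj b0 * p01 + conj b1 * p11))),
    normSq_nonneg (p11 - b1 * (conj b0 * p01 + conj b1 * p11) - c1 * (conj c0 * p10 + conj c1 * p11)
        + b1 * c1 * (conj c0 * (conj b0 * p00 + conj b1 * p10) + conj c1 * (conj b0 * p01 + conj b1 * p11)))]

set_option maxRecDepth 100000 in
set_option maxHeartbeats 2000000 in
lemma csId (b0 b1 c0 c1 f00 f01 f10 f11 : ℂ)
    (hb : b0 * conj b0 + b1 * conj b1 = 1)
    (hc : c0 * conj c0 + c1 * conj c1 = 1) :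
    (f00 * conj f00 + f01 * conj f01 + f10 * conj f10 + f11 * conj f11)
      - (conj b0 * conj c0 * f00 + conj b0 * conj c1 * f01 + conj b1 * conj c0 * f10 + conj b1 * conj c1 * f11)
        * conj (conj b0 * conj c0 * f00 + conj b0 * conj c1 * f01 + conj b1 * conj c0 * f10 + conj b1 * conj c1 * f11)
      - ((b0 * c0 * f01 - b0 * c1 * f00) * conj (b0 * c0 * f01 - b0 * c1 * f00)
        + (b0 * c0 * f10 - b1 * c0 * f00) * conj (b0 * c0 * f10 - b1 * c0 * f00)
        + (b0 * c0 * f11 - b1 * c1 * f00) * conj (b0 * c0 * f11 - b1 * c1 * f00)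
        + (b0 * c1 * f10 - b1 * c0 * f01) * conj (b0 * c1 * f10 - b1 * c0 * f01)
        + (b0 * c1 * f11 - b1 * c1 * f01) * conj (b0 * c1 * f11 - b1 * c1 * f01)
        + (b1 * c0 * f11 - b1 * c1 * f10) * conj (b1 * c0 * f11 - b1 * c1 * f10)) = 0 := by
  linear_combination (norm := (simp only [map_add, map_sub, _root_.map_mul, Complex.conj_conj]; ring1))
    (-((f00 * conj f00 + f01 * conj f01 + f10 * conj f10 + f11 * conj f11)
      * (c0 * conj c0 + c1 * conj c1)) : ℂ) * hb
    + (-(f00 * conj f00 + f01 * conj f01 + f10 * conj f10 + f11 * conj f11) : ℂ) * hc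

lemma csIneq (b0 b1 c0 c1 f00 f01 f10 f11 : ℂ)
    (hb : normSq b0 + normSq b1 = 1)
    (hc : normSq c0 + normSq c1 = 1) :
    normSq (conj b0 * conj c0 * f00 + conj b0 * conj c1 * f01
        + conj b1 * conj c0 * f10 + conj b1 * conj c1 * f11)
      ≤ normSq f00 + normSq f01 + normSq f10 + normSq f11 := by
  have hb' : b0 * conj b0 + b1 * conj b1 = 1 := by
    rw [mul_conj, mul_conj]; exact_mod_cast congrArg (Complex.ofReal) hb
  have hc' : c0 * conj c0 + c1 * conj c1 = 1 := by
    rw [mul_conj, mul_conj]; exact_mod_cast congrArg (Complex.ofReal) hc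
  have H := csId b0 b1 c0 c1 f00 f01 f10 f11 hb' hc'
  rw [mul_conj, mul_conj, mul_conj, mul_conj, mul_conj, mul_conj, mul_conj, mul_conj,
    mul_conj, mul_conj, mul_conj] at H
  have H' : (normSq f00 + normSq f01 + normSq f10 + normSq f11 : ℝ)
      - normSq (conj b0 * conj c0 * f00 + conj b0 * conj c1 * f01
          + conj b1 * conj c0 * f10 + conj b1 * conj c1 * f11)
      - (normSq (b0 * c0 * f01 - b0 * c1 * f00) + normSq (b0 * c0 * f10 - b1 * c0 * f00)
        + normSq (b0 * c0 * f11 - b1 * c1 * f00) + normSq (b0 * c1 * f10 - b1 * c0 * f01)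
        + normSq (b0 * c1 * f11 - b1 * c1 * f01) + normSq (b1 * c0 * f11 - b1 * c1 * f10)) = 0 := by
    exact_mod_cast H
  nlinarith [normSq_nonneg (b0 * c0 * f01 - b0 * c1 * f00), normSq_nonneg (b0 * c0 * f10 - b1 * c0 * f00),
    normSq_nonneg (b0 * c0 * f11 - b1 * c1 * f00), normSq_nonneg (b0 * c1 * f10 - b1 * c0 * f01),
    normSq_nonneg (b0 * c1 * f11 - b1 * c1 * f01), normSq_nonneg (b1 * c0 * f11 - b1 * c1 * f10)]

variable {M : Matrix (Fin 2) (Fin 2) ℂ}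

/-- Rayleigh upper bound for a 2×2 Hermitian complex matrix. -/
lemma rayleigh_le (hM : M.IsHermitian) (v : Fin 2 → ℂ) :
    (star v ⬝ᵥ M *ᵥ v).re ≤
      max (hM.eigenvalues 0) (hM.eigenvalues 1) * (normSq (v 0) + normSq (v 1)) := by
  set U : Matrix (Fin 2) (Fin 2) ℂ := (hM.eigenvectorUnitary : Matrix (Fin 2) (Fin 2) ℂ) with hU
  set w : Fin 2 → ℂ := (star U) *ᵥ v with hw
  have hsw : star w = star v ᵥ* U := by
    rw [hw, Matrix.star_mulVec, Matrix.star_eq_conjTranspose, Matrix.conjTranspose_conjTranspose]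
  have h1 : star v ⬝ᵥ M *ᵥ v =
      (hM.eigenvalues 0 : ℂ) * (normSq (w 0) : ℝ) + (hM.eigenvalues 1 : ℂ) * (normSq (w 1) : ℝ) := by
    conv_lhs => rw [hM.spectral_theorem, Unitary.conjStarAlgAut_apply]
    rw [← Matrix.mulVec_mulVec, ← Matrix.mulVec_mulVec, Matrix.dotProduct_mulVec, ← hsw, ← hw]
    simp only [Matrix.mulVec, dotProduct, Fin.sum_univ_two, Matrix.diagonal,
      Pi.star_apply, Function.comp_apply, RCLike.ofReal_alg, of_apply]
    rw [normSq_eq_conj_mul_self, normSq_eq_conj_mul_self]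
    simp only [Fin.isValue, one_ne_zero, reduceIte, if_true, if_false, zero_mul, mul_zero,
      add_zero, zero_add, Fin.zero_eta, Fin.mk_one, zero_ne_one]
    ring_nf
    simp [smul_eq_mul]
    ring
  have h2 : normSq (w 0) + normSq (w 1) = normSq (v 0) + normSq (v 1) := by
    have huu : U * star U = 1 := (Matrix.mem_unitaryGroup_iff).mp hM.eigenvectorUnitary.2
    have hd : star w ⬝ᵥ w = star v ⬝ᵥ v := by
      rw [hsw, hw, ← Matrix.dotProduct_mulVec, Matrix.mulVec_mulVec, huu, Matrix.one_mulVec]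
    have := congrArg Complex.re hd
    simpa [dotProduct, Fin.sum_univ_two, ← normSq_eq_conj_mul_self] using this
  have h3 : (star v ⬝ᵥ M *ᵥ v).re =
      hM.eigenvalues 0 * normSq (w 0) + hM.eigenvalues 1 * normSq (w 1) := by
    rw [h1]; simp [Complex.add_re, Complex.mul_re]
  have h4 : hM.eigenvalues 0 * normSq (w 0) + hM.eigenvalues 1 * normSq (w 1) ≤
      max (hM.eigenvalues 0) (hM.eigenvalues 1) * (normSq (w 0) + normSq (w 1)) := by
    have := le_max_left (hM.eigenvalues 0) (hM.eigenvalues 1)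
    have := le_max_right (hM.eigenvalues 0) (hM.eigenvalues 1)
    nlinarith [normSq_nonneg (w 0), normSq_nonneg (w 1)]
  rw [h3, ← h2]; exact h4

lemma eigvec_fact (hM : M.IsHermitian) (i : Fin 2) :
    normSq (hM.eigenvectorBasis i 0) + normSq (hM.eigenvectorBasis i 1) = 1 ∧
      (star (⇑(hM.eigenvectorBasis i) : Fin 2 → ℂ) ⬝ᵥ M *ᵥ ⇑(hM.eigenvectorBasis i)).re
        = hM.eigenvalues i := by
  constructor
  · have h1 : ‖hM.eigenvectorBasis i‖ = 1 := hM.eigenvectorBasis.orthonormal.1 i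
    have h2 := EuclideanSpace.norm_eq (hM.eigenvectorBasis i)
    rw [h1] at h2
    have h3 : (∑ j : Fin 2, ‖hM.eigenvectorBasis i j‖ ^ 2) = 1 := Real.sqrt_eq_one.mp h2.symm
    rw [Fin.sum_univ_two] at h3
    simpa only [← Complex.normSq_eq_norm_sq] using h3
  · rw [hM.eigenvalues_eq i]; rfl

lemma exists_top_eigvec (hM : M.IsHermitian) :
    ∃ b : Fin 2 → ℂ, normSq (b 0) + normSq (b 1) = 1 ∧
      (star b ⬝ᵥ M *ᵥ b).re = max (hM.eigenvalues 0) (hM.eigenvalues 1) := by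
  rcases max_cases (hM.eigenvalues 0) (hM.eigenvalues 1) with ⟨he, _⟩ | ⟨he, _⟩
  · exact ⟨⇑(hM.eigenvectorBasis 0), (eigvec_fact hM 0).1, by rw [he]; exact (eigvec_fact hM 0).2⟩
  · exact ⟨⇑(hM.eigenvectorBasis 1), (eigvec_fact hM 1).1, by rw [he]; exact (eigvec_fact hM 1).2⟩

lemma eig_sum (hM : M.IsHermitian) :
    hM.eigenvalues 0 + hM.eigenvalues 1 = (M.trace).re := by
  have h := hM.spectral_theorem
  have : M.trace = ((hM.eigenvalues 0 : ℂ) + hM.eigenvalues 1) := by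
    calc M.trace = ((hM.eigenvectorUnitary : Matrix (Fin 2) (Fin 2) ℂ) *
        (Matrix.diagonal (RCLike.ofReal ∘ hM.eigenvalues) * (star hM.eigenvectorUnitary : Matrix (Fin 2) (Fin 2) ℂ))).trace := by
          rw [← Matrix.mul_assoc]; conv_lhs => rw [h, Unitary.conjStarAlgAut_apply]
    _ = ((Matrix.diagonal (RCLike.ofReal ∘ hM.eigenvalues) * (star hM.eigenvectorUnitary : Matrix (Fin 2) (Fin 2) ℂ)) * (hM.eigenvectorUnitary : Matrix (Fin 2) (Fin 2) ℂ)).trace := Matrix.trace_mul_comm _ _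
    _ = (Matrix.diagonal (RCLike.ofReal ∘ hM.eigenvalues)).trace := by
          rw [Matrix.mul_assoc, (Matrix.mem_unitaryGroup_iff').mp hM.eigenvectorUnitary.2, Matrix.mul_one]
    _ = _ := by simp [Matrix.trace, Fin.sum_univ_two]
  rw [this]; simp

lemma eig_congr {N : Matrix (Fin 2) (Fin 2) ℂ} (h : M = N)
    (hM : M.IsHermitian) (hN : N.IsHermitian) (i : Fin 2) :
    hM.eigenvalues i = hN.eigenvalues i := by subst h; rfl

/-- quadratic form of rhoA -/
lemma formA (ψ : Fin 2 → Fin 2 → Fin 2 → ℂ) (v : Fin 2 → ℂ) :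
    (star v ⬝ᵥ rhoA ψ *ᵥ v).re =
      normSq (conj (v 0) * ψ 0 0 0 + conj (v 1) * ψ 1 0 0)
      + normSq (conj (v 0) * ψ 0 0 1 + conj (v 1) * ψ 1 0 1)
      + normSq (conj (v 0) * ψ 0 1 0 + conj (v 1) * ψ 1 1 0)
      + normSq (conj (v 0) * ψ 0 1 1 + conj (v 1) * ψ 1 1 1) := by
  have h : star v ⬝ᵥ rhoA ψ *ᵥ v =
      ((normSq (conj (v 0) * ψ 0 0 0 + conj (v 1) * ψ 1 0 0)
      + normSq (conj (v 0) * ψ 0 0 1 + conj (v 1) * ψ 1 0 1)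
      + normSq (conj (v 0) * ψ 0 1 0 + conj (v 1) * ψ 1 1 0)
      + normSq (conj (v 0) * ψ 0 1 1 + conj (v 1) * ψ 1 1 1) : ℝ) : ℂ) := by
    push_cast [normSq_eq_conj_mul_self]
    simp only [rhoA, Matrix.mulVec, dotProduct, Fin.sum_univ_two, Pi.star_apply,
      Complex.star_def, map_add, _root_.map_mul, Complex.conj_conj]
    ring
  rw [h]; exact Complex.ofReal_re _

lemma formB (ψ : Fin 2 → Fin 2 → Fin 2 → ℂ) (v : Fin 2 → ℂ) :
    (star v ⬝ᵥ rhoB ψ *ᵥ v).re =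
      normSq (conj (v 0) * ψ 0 0 0 + conj (v 1) * ψ 0 1 0)
      + normSq (conj (v 0) * ψ 0 0 1 + conj (v 1) * ψ 0 1 1)
      + normSq (conj (v 0) * ψ 1 0 0 + conj (v 1) * ψ 1 1 0)
      + normSq (conj (v 0) * ψ 1 0 1 + conj (v 1) * ψ 1 1 1) := by
  have h : star v ⬝ᵥ rhoB ψ *ᵥ v =
      ((normSq (conj (v 0) * ψ 0 0 0 + conj (v 1) * ψ 0 1 0)
      + normSq (conj (v 0) * ψ 0 0 1 + conj (v 1) * ψ 0 1 1)
      + normSq (conj (v 0) * ψ 1 0 0 + conj (v 1) * ψ 1 1 0)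
      + normSq (conj (v 0) * ψ 1 0 1 + conj (v 1) * ψ 1 1 1) : ℝ) : ℂ) := by
    push_cast [normSq_eq_conj_mul_self]
    simp only [rhoB, Matrix.mulVec, dotProduct, Fin.sum_univ_two, Pi.star_apply,
      Complex.star_def, map_add, _root_.map_mul, Complex.conj_conj]
    ring
  rw [h]; exact Complex.ofReal_re _

lemma formC (ψ : Fin 2 → Fin 2 → Fin 2 → ℂ) (v : Fin 2 → ℂ) :
    (star v ⬝ᵥ rhoC ψ *ᵥ v).re =
      normSq (conj (v 0) * ψ 0 0 0 + conj (v 1) * ψ 0 0 1)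
      + normSq (conj (v 0) * ψ 0 1 0 + conj (v 1) * ψ 0 1 1)
      + normSq (conj (v 0) * ψ 1 0 0 + conj (v 1) * ψ 1 0 1)
      + normSq (conj (v 0) * ψ 1 1 0 + conj (v 1) * ψ 1 1 1) := by
  have h : star v ⬝ᵥ rhoC ψ *ᵥ v =
      ((normSq (conj (v 0) * ψ 0 0 0 + conj (v 1) * ψ 0 0 1)
      + normSq (conj (v 0) * ψ 0 1 0 + conj (v 1) * ψ 0 1 1)
      + normSq (conj (v 0) * ψ 1 0 0 + conj (v 1) * ψ 1 0 1)
      + normSq (conj (v 0) * ψ 1 1 0 + conj (v 1) * ψ 1 1 1) : ℝ) : ℂ) := by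
    push_cast [normSq_eq_conj_mul_self]
    simp only [rhoC, Matrix.mulVec, dotProduct, Fin.sum_univ_two, Pi.star_apply,
      Complex.star_def, map_add, _root_.map_mul, Complex.conj_conj]
    ring
  rw [h]; exact Complex.ofReal_re _

end HiguchiAux
namespace HiguchiAux
open Complex Matrix

lemma master (ψ : Fin 2 → Fin 2 → Fin 2 → ℂ)
    (hψ : ∑ i : Fin 2, ∑ j : Fin 2, ∑ k : Fin 2, Complex.normSq (ψ i j k) = 1)
    (hA : (rhoA ψ).IsHermitian) (hB : (rhoB ψ).IsHermitian) (hC : (rhoC ψ).IsHermitian) :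
    max (hB.eigenvalues 0) (hB.eigenvalues 1) + max (hC.eigenvalues 0) (hC.eigenvalues 1)
      ≤ 1 + max (hA.eigenvalues 0) (hA.eigenvalues 1) := by
  obtain ⟨b, hbn, hbv⟩ := exists_top_eigvec hB
  obtain ⟨c, hcn, hcv⟩ := exists_top_eigvec hC
  rw [formB ψ b] at hbv
  rw [formC ψ c] at hcv
  simp only [Fin.sum_univ_two] at hψ
  have k0 := keyIneq (b 0) (b 1) (c 0) (c 1) (ψ 0 0 0) (ψ 0 0 1) (ψ 0 1 0) (ψ 0 1 1) hbn hcn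
  have k1 := keyIneq (b 0) (b 1) (c 0) (c 1) (ψ 1 0 0) (ψ 1 0 1) (ψ 1 1 0) (ψ 1 1 1) hbn hcn
  -- the vector φ
  have hray := rayleigh_le hA
    ![conj (c 0) * (conj (b 0) * ψ 0 0 0 + conj (b 1) * ψ 0 1 0)
        + conj (c 1) * (conj (b 0) * ψ 0 0 1 + conj (b 1) * ψ 0 1 1),
      conj (c 0) * (conj (b 0) * ψ 1 0 0 + conj (b 1) * ψ 1 1 0)
        + conj (c 1) * (conj (b 0) * ψ 1 0 1 + conj (b 1) * ψ 1 1 1)]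
  have hfa := formA ψ
    ![conj (c 0) * (conj (b 0) * ψ 0 0 0 + conj (b 1) * ψ 0 1 0)
        + conj (c 1) * (conj (b 0) * ψ 0 0 1 + conj (b 1) * ψ 0 1 1),
      conj (c 0) * (conj (b 0) * ψ 1 0 0 + conj (b 1) * ψ 1 1 0)
        + conj (c 1) * (conj (b 0) * ψ 1 0 1 + conj (b 1) * ψ 1 1 1)]
  simp only [Matrix.cons_val_zero, Matrix.cons_val_one, Matrix.head_cons] at hray hfa
  set φ0 : ℂ := conj (c 0) * (conj (b 0) * ψ 0 0 0 + conj (b 1) * ψ 0 1 0)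
        + conj (c 1) * (conj (b 0) * ψ 0 0 1 + conj (b 1) * ψ 0 1 1) with hφ0
  set φ1 : ℂ := conj (c 0) * (conj (b 0) * ψ 1 0 0 + conj (b 1) * ψ 1 1 0)
        + conj (c 1) * (conj (b 0) * ψ 1 0 1 + conj (b 1) * ψ 1 1 1) with hφ1
  have hcs := csIneq (b 0) (b 1) (c 0) (c 1)
    (conj φ0 * ψ 0 0 0 + conj φ1 * ψ 1 0 0) (conj φ0 * ψ 0 0 1 + conj φ1 * ψ 1 0 1)
    (conj φ0 * ψ 0 1 0 + conj φ1 * ψ 1 1 0) (conj φ0 * ψ 0 1 1 + conj φ1 * ψ 1 1 1) hbn hcn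
  have hinner : conj (b 0) * conj (c 0) * (conj φ0 * ψ 0 0 0 + conj φ1 * ψ 1 0 0)
      + conj (b 0) * conj (c 1) * (conj φ0 * ψ 0 0 1 + conj φ1 * ψ 1 0 1)
      + conj (b 1) * conj (c 0) * (conj φ0 * ψ 0 1 0 + conj φ1 * ψ 1 1 0)
      + conj (b 1) * conj (c 1) * (conj φ0 * ψ 0 1 1 + conj φ1 * ψ 1 1 1)
      = ((normSq φ0 + normSq φ1 : ℝ) : ℂ) := by
    rw [hφ0, hφ1]
    push_cast [normSq_eq_conj_mul_self]
    simp only [map_add, _root_.map_mul, Complex.conj_conj]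
    ring
  rw [hinner, Complex.normSq_ofReal] at hcs
  -- nonnegativity of the top eigenvalue of rhoA
  obtain ⟨a, han, hav⟩ := exists_top_eigvec hA
  rw [formA ψ a] at hav
  have hμA : 0 ≤ max (hA.eigenvalues 0) (hA.eigenvalues 1) := by
    rw [← hav]
    exact add_nonneg (add_nonneg (add_nonneg (normSq_nonneg _) (normSq_nonneg _))
      (normSq_nonneg _)) (normSq_nonneg _)
  have hs : 0 ≤ normSq φ0 + normSq φ1 := add_nonneg (normSq_nonneg _) (normSq_nonneg _)
  have hsq : (normSq φ0 + normSq φ1) * (normSq φ0 + normSq φ1)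
      ≤ max (hA.eigenvalues 0) (hA.eigenvalues 1) * (normSq φ0 + normSq φ1) := by
    calc (normSq φ0 + normSq φ1) * (normSq φ0 + normSq φ1) ≤ _ := hcs
    _ ≤ _ := by rw [← hfa]; exact hray
  have hfin : normSq φ0 + normSq φ1 ≤ max (hA.eigenvalues 0) (hA.eigenvalues 1) := by
    rcases eq_or_lt_of_le hs with h0 | h0
    · linarith
    · exact le_of_mul_le_mul_right hsq h0
  linarith [k0, k1]

end HiguchiAux

open Complex Matrix HiguchiAux

/-- Higuchi–Sudbery–Szulc polygon inequalities: for a unit vector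
`ψ ∈ ℂ²⊗ℂ²⊗ℂ²`, the smallest eigenvalues of the three one-qubit reduced density
matrices satisfy `λ_A ≤ λ_B + λ_C` and its cyclic permutations. -/
theorem higuchi_polygon_inequalities
    (ψ : Fin 2 → Fin 2 → Fin 2 → ℂ)
    (hψ : ∑ i : Fin 2, ∑ j : Fin 2, ∑ k : Fin 2, ‖ψ i j k‖ ^ 2 = 1)
    (hA : (rhoA ψ).IsHermitian) (hB : (rhoB ψ).IsHermitian)
    (hC : (rhoC ψ).IsHermitian) :
    min (hA.eigenvalues 0) (hA.eigenvalues 1) ≤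
        min (hB.eigenvalues 0) (hB.eigenvalues 1) +
          min (hC.eigenvalues 0) (hC.eigenvalues 1) ∧
    min (hB.eigenvalues 0) (hB.eigenvalues 1) ≤
        min (hC.eigenvalues 0) (hC.eigenvalues 1) +
          min (hA.eigenvalues 0) (hA.eigenvalues 1) ∧
    min (hC.eigenvalues 0) (hC.eigenvalues 1) ≤
        min (hA.eigenvalues 0) (hA.eigenvalues 1) +
          min (hB.eigenvalues 0) (hB.eigenvalues 1) := by
  have hψ' : ∑ i : Fin 2, ∑ j : Fin 2, ∑ k : Fin 2, Complex.normSq (ψ i j k) = 1 := by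
    simpa only [← Complex.normSq_eq_norm_sq] using hψ
  -- permuted states
  set ψ1 : Fin 2 → Fin 2 → Fin 2 → ℂ := fun j k i => ψ i j k with hψ1def
  set ψ2 : Fin 2 → Fin 2 → Fin 2 → ℂ := fun k i j => ψ i j k with hψ2def
  have hψ1 : ∑ i : Fin 2, ∑ j : Fin 2, ∑ k : Fin 2, Complex.normSq (ψ1 i j k) = 1 := by
    simp only [hψ1def, Fin.sum_univ_two] at hψ' ⊢; linarith
  have hψ2 : ∑ i : Fin 2, ∑ j : Fin 2, ∑ k : Fin 2, Complex.normSq (ψ2 i j k) = 1 := by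
    simp only [hψ2def, Fin.sum_univ_two] at hψ' ⊢; linarith
  have e1A : rhoA ψ1 = rhoB ψ := by
    ext x x'; simp only [rhoA, rhoB, hψ1def]; rw [Finset.sum_comm]
  have e1B : rhoB ψ1 = rhoC ψ := by
    ext x x'; simp only [rhoB, rhoC, hψ1def]; rw [Finset.sum_comm]
  have e1C : rhoC ψ1 = rhoA ψ := by
    ext x x'; simp only [rhoC, rhoA, hψ1def]
  have e2A : rhoA ψ2 = rhoC ψ := by
    ext x x'; simp only [rhoA, rhoC, hψ2def]
  have e2B : rhoB ψ2 = rhoA ψ := by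
    ext x x'; simp only [rhoB, rhoA, hψ2def]; rw [Finset.sum_comm]
  have e2C : rhoC ψ2 = rhoB ψ := by
    ext x x'; simp only [rhoC, rhoB, hψ2def]; rw [Finset.sum_comm]
  have hA1 : (rhoA ψ1).IsHermitian := by rw [e1A]; exact hB
  have hB1 : (rhoB ψ1).IsHermitian := by rw [e1B]; exact hC
  have hC1 : (rhoC ψ1).IsHermitian := by rw [e1C]; exact hA
  have hA2 : (rhoA ψ2).IsHermitian := by rw [e2A]; exact hC
  have hB2 : (rhoB ψ2).IsHermitian := by rw [e2B]; exact hA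
  have hC2 : (rhoC ψ2).IsHermitian := by rw [e2C]; exact hB
  -- three polygon inequalities in "max" form
  have m0 := master ψ hψ' hA hB hC
  have m1 := master ψ1 hψ1 hA1 hB1 hC1
  have m2 := master ψ2 hψ2 hA2 hB2 hC2
  rw [eig_congr e1B hB1 hC 0, eig_congr e1B hB1 hC 1, eig_congr e1C hC1 hA 0,
    eig_congr e1C hC1 hA 1, eig_congr e1A hA1 hB 0, eig_congr e1A hA1 hB 1] at m1
  rw [eig_congr e2B hB2 hA 0, eig_congr e2B hB2 hA 1, eig_congr e2C hC2 hB 0,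
    eig_congr e2C hC2 hB 1, eig_congr e2A hA2 hC 0, eig_congr e2A hA2 hC 1] at m2
  -- traces are 1
  have tA : ((rhoA ψ).trace).re = 1 := by
    have h : (rhoA ψ).trace =
        ((∑ i : Fin 2, ∑ j : Fin 2, ∑ k : Fin 2, Complex.normSq (ψ i j k) : ℝ) : ℂ) := by
      push_cast [normSq_eq_conj_mul_self]
      simp only [Matrix.trace, Matrix.diag, rhoA, Fin.sum_univ_two]
      ring
    rw [h, hψ']; exact Complex.ofReal_one ▸ rfl
  have tB : ((rhoB ψ).trace).re = 1 := by
    have h : (rhoB ψ).trace =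
        ((∑ i : Fin 2, ∑ j : Fin 2, ∑ k : Fin 2, Complex.normSq (ψ i j k) : ℝ) : ℂ) := by
      push_cast [normSq_eq_conj_mul_self]
      simp only [Matrix.trace, Matrix.diag, rhoB, Fin.sum_univ_two]
      ring
    rw [h, hψ']; exact Complex.ofReal_one ▸ rfl
  have tC : ((rhoC ψ).trace).re = 1 := by
    have h : (rhoC ψ).trace =
        ((∑ i : Fin 2, ∑ j : Fin 2, ∑ k : Fin 2, Complex.normSq (ψ i j k) : ℝ) : ℂ) := by
      push_cast [normSq_eq_conj_mul_self]
      simp only [Matrix.trace, Matrix.diag, rhoC, Fin.sum_univ_two]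
      ring
    rw [h, hψ']; exact Complex.ofReal_one ▸ rfl
  have sA := eig_sum hA; have sB := eig_sum hB; have sC := eig_sum hC
  rw [tA] at sA; rw [tB] at sB; rw [tC] at sC
  have mmA := min_add_max (hA.eigenvalues 0) (hA.eigenvalues 1)
  have mmB := min_add_max (hB.eigenvalues 0) (hB.eigenvalues 1)
  have mmC := min_add_max (hC.eigenvalues 0) (hC.eigenvalues 1)
  refine ⟨by linarith, by linarith, by linarith⟩
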